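/- In the setting of the previous lemma, let H' = ⟨g_∞, h⟩ ≤ GL(V), V = 𝔽̄_ℓ⁷. Then V = V₁ ⊕ V₂ with V₁ = Eig(g_∞, 1) one-dimensional and V₂ = ⊕_{i=1}^{6} Eig(g_∞, ζ₇ⁱ), both H'-invariant, and every nonzero proper H'-submodule of V equals V₁ or V₂. -/
import Mathlib


open Matrix

/-- In the setting of the previous lemma, with
`H' = ⟨g_∞, h⟩ ≤ GL(V)`, `V = 𝔽̄_ℓ⁷` decomposes as `V₁ ⊕ V₂` with
`V₁ = Eig(g_∞, 1)` one-dimensional and `V₂` the sum of the other eigenspaces,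
both `H'`-invariant, and every nonzero proper `H'`-submodule of `V` equals `V₁`
or `V₂`. -/
theorem submodules_are_V1_or_V2
    (ℓ : ℕ) [Fact ℓ.Prime] (h7 : ℓ ≠ 7)
    (K : Type*) [Field K] [IsAlgClosed K] [CharP K ℓ]
    (ζ : K) (hζ : IsPrimitiveRoot ζ 7)
    (g : Matrix (Fin 7) (Fin 7) K)
    (hg : g = Matrix.diagonal fun i : Fin 7 => ζ ^ ((i : ℕ) + 1))
    (σ : Equiv.Perm (Fin 7))
    (hσ : σ 0 = 2 ∧ σ 2 = 1 ∧ σ 1 = 5 ∧ σ 5 = 3 ∧ σ 3 = 4 ∧ σ 4 = 0 ∧ σ 6 = 6)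
    (d : Fin 7 → K) (hd : ∀ i, d i ≠ 0)
    (h : Matrix (Fin 7) (Fin 7) K)
    (hh : h = (σ.permMatrix K) * Matrix.diagonal d)
    (V₁ : Submodule K (Fin 7 → K))
    (hV₁ : ∀ v : Fin 7 → K, v ∈ V₁ ↔ ∀ i : Fin 7, i ≠ 6 → v i = 0)
    (V₂ : Submodule K (Fin 7 → K)) (hV₂ : ∀ v : Fin 7 → K, v ∈ V₂ ↔ v 6 = 0) :
    IsCompl V₁ V₂ ∧
    (∀ v ∈ V₁, g.mulVec v ∈ V₁) ∧ (∀ v ∈ V₁, h.mulVec v ∈ V₁) ∧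
    (∀ v ∈ V₂, g.mulVec v ∈ V₂) ∧ (∀ v ∈ V₂, h.mulVec v ∈ V₂) ∧
    (∀ U : Submodule K (Fin 7 → K),
      (∀ v ∈ U, g.mulVec v ∈ U) → (∀ v ∈ U, h.mulVec v ∈ U) →
      U ≠ ⊥ → U ≠ ⊤ → U = V₁ ∨ U = V₂) := by
  classical
  obtain ⟨hσ0, hσ2, hσ1, hσ5, hσ3, hσ4, hσ6⟩ := hσ
  set lam : Fin 7 → K := fun i => ζ ^ ((i : ℕ) + 1) with hlamdef
  set e : Fin 7 → (Fin 7 → K) := fun i => Pi.single i (1 : K) with hedef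
  have hea : ∀ i j : Fin 7, e i j = if j = i then 1 else 0 := by
    intro i j
    by_cases hj : j = i
    · subst hj; simp [hedef]
    · simp [hedef, Pi.single_eq_of_ne hj, hj]
  have hpow7 : ∀ m : ℕ, ζ ^ (m % 7) = ζ ^ m := by
    intro m
    conv_rhs => rw [← Nat.div_add_mod m 7]
    rw [pow_add, pow_mul, hζ.pow_eq_one, one_pow, one_mul]
  have hlaminj : ∀ i j : Fin 7, lam i = lam j → i = j := by
    intro i j hij
    have h1 : ζ ^ (((i : ℕ) + 1) % 7) = ζ ^ (((j : ℕ) + 1) % 7) := by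
      rw [hpow7, hpow7]; exact hij
    have h2 := hζ.pow_inj (Nat.mod_lt _ (by norm_num)) (Nat.mod_lt _ (by norm_num)) h1
    have hi := i.isLt; have hj := j.isLt
    exact Fin.ext (by omega)
  have hgv : ∀ (v : Fin 7 → K) (i : Fin 7), g.mulVec v i = lam i * v i := by
    intro v i; rw [hg]; simp [Matrix.mulVec_diagonal]
  have hhv : ∀ (v : Fin 7 → K) (i : Fin 7), h.mulVec v i = d (σ i) * v (σ i) := by
    intro v i
    rw [hh, ← Matrix.mulVec_mulVec]
    have hp : ∀ (w : Fin 7 → K), (σ.permMatrix K).mulVec w i = w (σ i) := by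
      intro w
      simp [Matrix.mulVec, PEquiv.toMatrix, dotProduct, Equiv.toPEquiv]
    rw [hp]; simp [Matrix.mulVec_diagonal]
  have hsingle : ∀ (i : Fin 7) (c : K), Pi.single i c = c • e i := by
    intro i c; funext m
    by_cases hm : m = i
    · subst hm; simp [hedef]
    · simp [hedef, Pi.single_eq_of_ne hm]
  have hcompl : IsCompl V₁ V₂ := by
    constructor
    · rw [disjoint_iff_inf_le]
      intro v hv
      rcases hv with ⟨hv1, hv2⟩
      rw [Submodule.mem_bot]
      funext i
      by_cases hi : i = 6
      · rw [hi]; exact (hV₂ v).mp hv2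
      · exact (hV₁ v).mp hv1 i hi
    · rw [codisjoint_iff_le_sup]
      intro v _
      refine Submodule.mem_sup.mpr ⟨Pi.single 6 (v 6), ?_, v - Pi.single 6 (v 6), ?_, by abel⟩
      · rw [hV₁]; intro i hi; simp [Pi.single_eq_of_ne hi]
      · rw [hV₂]; simp
  refine ⟨hcompl, ?_, ?_, ?_, ?_, ?_⟩
  · intro v hv; rw [hV₁] at hv ⊢; intro i hi; rw [hgv]; rw [hv i hi]; ring
  · intro v hv; rw [hV₁] at hv ⊢; intro i hi; rw [hhv]
    have : σ i ≠ 6 := by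
      intro hcon
      have : σ i = σ 6 := by rw [hcon, hσ6]
      exact hi (σ.injective this)
    rw [hv _ this]; ring
  · intro v hv; rw [hV₂] at hv ⊢; rw [hgv, hv]; ring
  · intro v hv; rw [hV₂] at hv ⊢; rw [hhv, hσ6, hv]; ring
  intro U hUg hUh hUbot hUtop
  have key : ∀ (n : ℕ) (v : Fin 7 → K), v ∈ U →
      (Finset.univ.filter fun j => v j ≠ 0).card ≤ n →
      ∀ i, v i ≠ 0 → e i ∈ U := by
    intro n
    induction n with
    | zero =>
      intro v hv hcard i hi
      have hmem : i ∈ Finset.univ.filter fun j => v j ≠ 0 :=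
        Finset.mem_filter.mpr ⟨Finset.mem_univ i, hi⟩
      have hempty : (Finset.univ.filter fun j => v j ≠ 0) = ∅ :=
        Finset.card_eq_zero.mp (Nat.le_zero.mp hcard)
      rw [hempty] at hmem
      exact absurd hmem (Finset.notMem_empty i)
    | succ n ih =>
      intro v hv hcard i hi
      by_cases hsupp : ∀ j : Fin 7, j ≠ i → v j = 0
      · have hv' : v = (v i) • e i := by
          funext j
          by_cases hj : j = i
          · subst hj; simp [hea]
          · simp [hea, hj, hsupp j hj]
        have hmem : v i • e i ∈ U := by rw [← hv']; exact hv
        have hmem2 := U.smul_mem (v i)⁻¹ hmem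
        rwa [smul_smul, inv_mul_cancel₀ hi, one_smul] at hmem2
      · push_neg at hsupp
        obtain ⟨j, hji, hvj⟩ := hsupp
        set w : Fin 7 → K := g.mulVec v - lam j • v with hw
        have hwU : w ∈ U := U.sub_mem (hUg v hv) (U.smul_mem _ hv)
        have hwk : ∀ k, w k = (lam k - lam j) * v k := by
          intro k
          rw [hw]
          simp only [Pi.sub_apply, Pi.smul_apply, smul_eq_mul, hgv]
          ring
        have hwi : w i ≠ 0 := by
          rw [hwk]
          exact mul_ne_zero (sub_ne_zero.mpr fun hc => hji (hlaminj i j hc).symm) hi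
        have hwj : w j = 0 := by rw [hwk]; ring
        refine ih w hwU ?_ i hwi
        have hsub : (Finset.univ.filter fun k => w k ≠ 0) ⊆
            (Finset.univ.filter fun k => v k ≠ 0).erase j := by
          intro k hk
          rw [Finset.mem_filter] at hk
          refine Finset.mem_erase.mpr ⟨fun hc => hk.2 (hc ▸ hwj),
            Finset.mem_filter.mpr ⟨Finset.mem_univ _, fun hc => hk.2 ?_⟩⟩
          rw [hwk, hc]; ring
        have hje : j ∈ Finset.univ.filter fun k => v k ≠ 0 :=
          Finset.mem_filter.mpr ⟨Finset.mem_univ _, hvj⟩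
        calc (Finset.univ.filter fun k => w k ≠ 0).card
            ≤ ((Finset.univ.filter fun k => v k ≠ 0).erase j).card := Finset.card_le_card hsub
          _ = (Finset.univ.filter fun k => v k ≠ 0).card - 1 := Finset.card_erase_of_mem hje
          _ ≤ n := by
              have := Finset.card_pos.mpr ⟨j, hje⟩
              omega
  have key' : ∀ v ∈ U, ∀ i, v i ≠ 0 → e i ∈ U := by
    intro v hv i hi
    refine key 7 v hv ?_ i hi
    calc (Finset.univ.filter fun j => v j ≠ 0).card
        ≤ (Finset.univ : Finset (Fin 7)).card := Finset.card_le_card (Finset.filter_subset _ _)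
      _ = 7 := by simp
  have step : ∀ j k : Fin 7, σ k = j → e j ∈ U → e k ∈ U := by
    intro j k hjk hj
    have hm := hUh _ hj
    have hne : h.mulVec (e j) k ≠ 0 := by
      rw [hhv, hjk, hea]
      simp [hd j]
    exact key' _ hm k hne
  have hdecomp : ∀ v : Fin 7 → K, v = ∑ k : Fin 7, (v k) • e k := by
    intro v
    conv_lhs => rw [← Finset.univ_sum_single v]
    exact Finset.sum_congr rfl fun k _ => hsingle k (v k)
  by_cases hc : ∃ i : Fin 7, i ≠ 6 ∧ e i ∈ U
  · obtain ⟨i, hi6, hiU⟩ := hc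
    have c40 : e 0 ∈ U → e 4 ∈ U := step 0 4 hσ4
    have c34 : e 4 ∈ U → e 3 ∈ U := step 4 3 hσ3
    have c53 : e 3 ∈ U → e 5 ∈ U := step 3 5 hσ5
    have c15 : e 5 ∈ U → e 1 ∈ U := step 5 1 hσ1
    have c21 : e 1 ∈ U → e 2 ∈ U := step 1 2 hσ2
    have c02 : e 2 ∈ U → e 0 ∈ U := step 2 0 hσ0
    have h0 : e 0 ∈ U := by
      fin_cases i
      · exact hiU
      · exact c02 (c21 hiU)
      · exact c02 hiU
      · exact c02 (c21 (c15 (c53 hiU)))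
      · exact c02 (c21 (c15 (c53 (c34 hiU))))
      · exact c02 (c21 (c15 hiU))
      · exact absurd rfl hi6
    have h4 := c40 h0
    have h3 := c34 h4
    have h5 := c53 h3
    have h1 := c15 h5
    have h2 := c21 h1
    have hall : ∀ k : Fin 7, k ≠ 6 → e k ∈ U := by
      intro k hk
      fin_cases k
      · exact h0
      · exact h1
      · exact h2
      · exact h3
      · exact h4
      · exact h5
      · exact absurd rfl hk
    by_cases h6 : e 6 ∈ U
    · exfalso; apply hUtop
      rw [Submodule.eq_top_iff']
      intro v
      rw [hdecomp v]
      refine Submodule.sum_mem U fun k _ => ?_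
      by_cases hk : k = 6
      · subst hk; exact U.smul_mem _ h6
      · exact U.smul_mem _ (hall k hk)
    · right
      apply le_antisymm
      · intro v hv
        rw [hV₂]
        by_contra hv6
        exact h6 (key' v hv 6 hv6)
      · intro v hv
        rw [hV₂] at hv
        rw [hdecomp v]
        refine Submodule.sum_mem U fun k _ => ?_
        by_cases hk : k = 6
        · subst hk; rw [hv]; simp
        · exact U.smul_mem _ (hall k hk)
  · left
    push_neg at hc
    have hUle : U ≤ V₁ := by
      intro v hv
      rw [hV₁]
      intro i hi
      by_contra hvi
      exact hc i hi (key' v hv i hvi)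
    apply le_antisymm hUle
    obtain ⟨v, hvU, hvne⟩ := Submodule.exists_mem_ne_zero_of_ne_bot hUbot
    have hv6 : v 6 ≠ 0 := by
      intro hcon
      apply hvne
      funext i
      by_cases hi : i = 6
      · rw [hi]; exact hcon
      · exact (hV₁ v).mp (hUle hvU) i hi
    have h6U : e 6 ∈ U := key' v hvU 6 hv6
    intro w hw
    rw [hV₁] at hw
    have hweq : w = (w 6) • e 6 := by
      funext m
      by_cases hm : m = 6
      · subst hm; simp [hea]
      · simp [hea, hm, hw m hm]
    rw [hweq]
    exact U.smul_mem _ h6U
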